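/- Let f_1(λ) := (1−λ)·(log(1−λ))²/λ for λ ∈ (0,1). There exists a unique λ̃_1 ∈ (0,1) such that −2λ̃_1 − log(1−λ̃_1) = 0 (numerically λ̃_1 ≈ 0.7968), and λ̃_1 ∈ (1/2, 1). Moreover f_1′(λ) > 0 for λ ∈ (0, λ̃_1) and f_1′(λ) < 0 for λ ∈ (λ̃_1, 1), so that sup_{λ∈(0,1)} f_1(λ) = f_1(λ̃_1) and λ̃_1 is the unique maximizer of f_1 on (0,1). -/

import Mathlib

open Set
open Real

lemma gderiv (l : ℝ) (hl : l < 1) : HasDerivAt (fun x : ℝ => -2 * x - Real.log (1 - x)) (-2 + 1/(1-l)) l := by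
  have h1 : (1:ℝ) - l ≠ 0 := by linarith
  have hlog : HasDerivAt (fun x : ℝ => Real.log (1 - x)) ((1-l)⁻¹ * (-1)) l :=
    (Real.hasDerivAt_log h1).comp l ((hasDerivAt_id l).const_sub 1)
  have h2 : HasDerivAt (fun x : ℝ => -2 * x) (-2 : ℝ) l := by
    simpa using (hasDerivAt_id l).const_mul (-2 : ℝ)
  refine (h2.fun_sub hlog).congr_deriv ?_
  field_simp
  ring

lemma fderiv' (l : ℝ) (hl0 : 0 < l) (hl : l < 1) :
    HasDerivAt (fun x : ℝ => (1 - x) * (Real.log (1 - x)) ^ 2 / x)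
      ((Real.log (1-l)) * (-2*l - Real.log (1-l)) / l ^ 2) l := by
  have h1 : (1:ℝ) - l ≠ 0 := by linarith
  have h0 : l ≠ 0 := ne_of_gt hl0
  have hlog : HasDerivAt (fun x : ℝ => Real.log (1 - x)) ((1-l)⁻¹ * (-1)) l :=
    (Real.hasDerivAt_log h1).comp l ((hasDerivAt_id l).const_sub 1)
  have hsq : HasDerivAt (fun x : ℝ => (Real.log (1 - x)) ^ 2)
      (2 * Real.log (1-l) * ((1-l)⁻¹ * (-1))) l := by
    simpa [mul_comm, mul_assoc] using hlog.fun_pow 2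
  have hnum : HasDerivAt (fun x : ℝ => (1 - x) * (Real.log (1 - x)) ^ 2)
      ((-1) * (Real.log (1-l))^2 + (1-l) * (2 * Real.log (1-l) * ((1-l)⁻¹ * (-1)))) l :=
    (((hasDerivAt_id l).const_sub 1).mul hsq)
  have := hnum.fun_div (hasDerivAt_id l) h0
  refine this.congr_deriv ?_
  simp only [id]
  field_simp
  ring

lemma gcont {l : ℝ} (hl : l < 1) : ContinuousAt (fun x : ℝ => -2 * x - Real.log (1 - x)) l := by
  have h1 : (1:ℝ) - l ≠ 0 := by linarith
  exact ((continuousAt_const.mul continuousAt_id).sub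
    ((continuousAt_const.sub continuousAt_id).log h1))

/-- The function `f₁(λ) = (1−λ)(log(1−λ))²/λ` on `(0,1)` has a unique critical point
`λ̃₁ ∈ (1/2, 1)`, characterized by `−2λ̃₁ − log(1−λ̃₁) = 0`; `f₁` increases before it,
decreases after it, and it is the unique maximizer of `f₁` on `(0,1)`. -/
theorem stmt_6 (f₁ : ℝ → ℝ)
    (hf₁ : ∀ l, f₁ l = (1 - l) * (Real.log (1 - l)) ^ 2 / l) :
    ∃ l₁ : ℝ,
      (l₁ ∈ Set.Ioo (0 : ℝ) 1 ∧ -2 * l₁ - Real.log (1 - l₁) = 0) ∧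
      (∀ l ∈ Set.Ioo (0 : ℝ) 1, -2 * l - Real.log (1 - l) = 0 → l = l₁) ∧
      l₁ ∈ Set.Ioo (1 / 2 : ℝ) 1 ∧
      (∀ l ∈ Set.Ioo (0 : ℝ) l₁, 0 < deriv f₁ l) ∧
      (∀ l ∈ Set.Ioo l₁ 1, deriv f₁ l < 0) ∧
      sSup (f₁ '' Set.Ioo (0 : ℝ) 1) = f₁ l₁ ∧
      (∀ l ∈ Set.Ioo (0 : ℝ) 1, l ≠ l₁ → f₁ l < f₁ l₁) := by
  set g : ℝ → ℝ := fun l => -2 * l - Real.log (1 - l) with hgdef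
  -- endpoints for IVT
  set b : ℝ := 1 - Real.exp (-3) with hbdef
  have hexp3 : (2:ℝ) < Real.exp 3 := by
    have := Real.add_one_le_exp (3:ℝ); linarith
  have hexpneg : Real.exp (-3) < 1/2 := by
    rw [Real.exp_neg]
    rw [inv_lt_comm₀ (by positivity) (by norm_num)]
    simpa using hexp3
  have hexppos : (0:ℝ) < Real.exp (-3) := Real.exp_pos _
  have hb1 : b < 1 := by simp [hbdef]; positivity
  have hbhalf : (1/2:ℝ) < b := by rw [hbdef]; linarith
  have gb : g b = 1 + 2 * Real.exp (-3) := by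
    simp only [hgdef, hbdef]
    rw [show (1:ℝ) - (1 - Real.exp (-3)) = Real.exp (-3) by ring, Real.log_exp]
    ring
  have ga : g (1/2) = -1 + Real.log 2 := by
    simp only [hgdef]
    rw [show (1:ℝ) - 1/2 = 2⁻¹ by norm_num, Real.log_inv]
    ring
  have galt : g (1/2) < 0 := by
    rw [ga]; have := Real.log_two_lt_d9; linarith
  have gbgt : 0 < g b := by rw [gb]; positivity
  -- continuity of g on sets below 1
  have gconton : ∀ s : Set ℝ, s ⊆ Iio 1 → ContinuousOn g s := by
    intro s hs x hx
    exact (gcont (hs hx)).continuousWithinAt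
  -- IVT
  obtain ⟨c, hcmem, hgc⟩ : ∃ c ∈ Icc (1/2 : ℝ) b, g c = 0 := by
    have := intermediate_value_Icc (le_of_lt hbhalf)
      (gconton _ (fun x hx => lt_of_le_of_lt hx.2 hb1))
    have h0 : (0:ℝ) ∈ Icc (g (1/2)) (g b) := ⟨le_of_lt galt, le_of_lt gbgt⟩
    obtain ⟨c, hc, hgc⟩ := this h0
    exact ⟨c, hc, hgc⟩
  have hc1 : c < 1 := lt_of_le_of_lt hcmem.2 hb1
  have hchalf : (1/2:ℝ) < c := by
    rcases lt_or_eq_of_le hcmem.1 with h | h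
    · exact h
    · exfalso; rw [← h] at hgc; rw [hgc] at galt; exact lt_irrefl 0 galt
  have hc0 : (0:ℝ) < c := by linarith
  -- derivative of g and monotonicity pieces
  have hgd : ∀ l : ℝ, l < 1 → deriv g l = -2 + 1/(1-l) := fun l hl => (gderiv l hl).deriv
  have hmonog : StrictMonoOn g (Ico (1/2 : ℝ) 1) := by
    apply strictMonoOn_of_deriv_pos (convex_Ico _ _)
      (gconton _ (fun x hx => hx.2))
    intro x hx
    rw [interior_Ico] at hx
    rw [hgd x hx.2]
    have h1 : (0:ℝ) < 1 - x := by linarith [hx.1, hx.2]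
    have : (2:ℝ) < 1/(1-x) := by
      rw [lt_div_iff₀ h1]; linarith [hx.1]
    linarith
  have hantig : StrictAntiOn g (Icc (0 : ℝ) (1/2)) := by
    apply strictAntiOn_of_deriv_neg (convex_Icc _ _)
      (gconton _ (fun x hx => lt_of_le_of_lt hx.2 (by norm_num)))
    intro x hx
    rw [interior_Icc] at hx
    rw [hgd x (by linarith [hx.2])]
    have h1 : (1/2:ℝ) < 1 - x := by linarith [hx.2]
    have : 1/(1-x) < 2 := by
      rw [div_lt_iff₀ (by linarith)]; linarith
    linarith
  have hg0 : g 0 = 0 := by simp [hgdef]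
  -- sign of g
  have hneg : ∀ l ∈ Ioo (0:ℝ) c, g l < 0 := by
    intro l hl
    rcases le_or_gt l (1/2) with h | h
    · have := hantig (by constructor <;> norm_num) ⟨le_of_lt hl.1, h⟩ hl.1
      rwa [hg0] at this
    · have := hmonog ⟨le_of_lt h, by linarith [hl.2]⟩ ⟨le_of_lt hchalf, hc1⟩ hl.2
      rwa [hgc] at this
  have hpos : ∀ l ∈ Ioo c (1:ℝ), 0 < g l := by
    intro l hl
    have := hmonog ⟨le_of_lt hchalf, hc1⟩ ⟨by linarith [hl.1, hchalf], hl.2⟩ hl.1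
    rwa [hgc] at this
  -- f₁ as the explicit function
  have hfe : f₁ = fun x : ℝ => (1 - x) * (Real.log (1 - x)) ^ 2 / x := funext hf₁
  have hdf : ∀ l : ℝ, 0 < l → l < 1 →
      deriv f₁ l = (Real.log (1-l)) * (g l) / l ^ 2 := by
    intro l h0 h1
    rw [hfe]
    exact (fderiv' l h0 h1).deriv
  have hlogneg : ∀ l : ℝ, 0 < l → l < 1 → Real.log (1 - l) < 0 := by
    intro l h0 h1
    exact Real.log_neg (by linarith) (by linarith)
  have hdpos : ∀ l ∈ Ioo (0:ℝ) c, 0 < deriv f₁ l := by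
    intro l hl
    have h1 : l < 1 := lt_trans hl.2 hc1
    rw [hdf l hl.1 h1]
    exact div_pos (mul_pos_of_neg_of_neg (hlogneg l hl.1 h1) (hneg l hl)) (pow_pos hl.1 2)
  have hdneg : ∀ l ∈ Ioo c (1:ℝ), deriv f₁ l < 0 := by
    intro l hl
    have h0 : 0 < l := lt_trans hc0 hl.1
    rw [hdf l h0 hl.2]
    exact div_neg_of_neg_of_pos
      (mul_neg_of_neg_of_pos (hlogneg l h0 hl.2) (hpos l hl)) (pow_pos h0 2)
  -- continuity of f₁ away from 0 and 1
  have hfcont : ∀ l : ℝ, 0 < l → l < 1 → ContinuousAt f₁ l := by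
    intro l h0 h1
    rw [hfe]
    have hne : (1:ℝ) - l ≠ 0 := by linarith
    exact ((continuousAt_const.sub continuousAt_id).mul
      (((continuousAt_const.sub continuousAt_id).log hne).pow 2)).div
      continuousAt_id (ne_of_gt h0)
  -- strict monotonicity of f₁
  have hmonof : StrictMonoOn f₁ (Ioc (0:ℝ) c) := by
    apply strictMonoOn_of_deriv_pos (convex_Ioc _ _)
    · intro x hx
      exact (hfcont x hx.1 (lt_of_le_of_lt hx.2 hc1)).continuousWithinAt
    · intro x hx
      rw [interior_Ioc] at hx
      exact hdpos x hx
  have hantif : StrictAntiOn f₁ (Ico c (1:ℝ)) := by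
    apply strictAntiOn_of_deriv_neg (convex_Ico _ _)
    · intro x hx
      exact (hfcont x (lt_of_lt_of_le hc0 hx.1) hx.2).continuousWithinAt
    · intro x hx
      rw [interior_Ico] at hx
      exact hdneg x hx
  have hmax : ∀ l ∈ Ioo (0:ℝ) 1, l ≠ c → f₁ l < f₁ c := by
    intro l hl hne
    rcases lt_or_gt_of_ne hne with h | h
    · exact hmonof ⟨hl.1, le_of_lt h⟩ ⟨hc0, le_refl c⟩ h
    · exact hantif ⟨le_refl c, hc1⟩ ⟨le_of_lt h, hl.2⟩ h
  have hcIoo : c ∈ Ioo (0:ℝ) 1 := ⟨hc0, hc1⟩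
  refine ⟨c, ⟨hcIoo, hgc⟩, ?_, ⟨hchalf, hc1⟩, hdpos, hdneg, ?_, hmax⟩
  · intro l hl hgl
    by_contra hne
    rcases lt_or_gt_of_ne hne with h | h
    · exact absurd hgl (ne_of_lt (hneg l ⟨hl.1, h⟩))
    · exact absurd hgl (ne_of_gt (hpos l ⟨h, hl.2⟩))
  · apply IsGreatest.csSup_eq
    constructor
    · exact ⟨c, hcIoo, rfl⟩
    · rintro y ⟨l, hl, rfl⟩
      by_cases hne : l = c
      · rw [hne]
      · exact le_of_lt (hmax l hl hne)
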